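/- (Jackknife+ predictive interval endpoints under linear least squares.) With the setup of leave-one-out least squares, for the combined dataset including a test point x_{new}, the quantity ŷ_{new}^{-(i,new)} + (y_i - ŷ_i^{-(i,new)}) equals x_{new}ᵀβ̂ + (1 - h_{i,new}) u_i, where u_i = (y_i - x_iᵀβ̂)/(1 - h_{ii}) is the deleted residual and h_{i,new} = x_{new}ᵀ(XᵀX)⁻¹x_i, where β̂ is the full-data least squares estimator. -/

import Mathlib

open Matrix

private lemma vmv_mulVec {p : ℕ} (x y w : Fin p → ℝ) :
    vecMulVec x y *ᵥ w = (y ⬝ᵥ w) • x := by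
  ext j
  simp only [vecMulVec, mulVec, dotProduct, of_apply, Pi.smul_apply, smul_eq_mul,
    Finset.sum_mul, Finset.mul_sum]
  exact Finset.sum_congr rfl fun _ _ => by ring

/-- Jackknife+ interval endpoints under linear least squares:
`ŷ_{new}^{-(i,new)} + (y_i - ŷ_i^{-(i,new)}) = x_{new}ᵀβ̂ + (1 - h_{i,new}) u_i`,
where `u_i` is the deleted residual and `β̂` the full-data least squares estimator. -/
theorem stmt_5 (n p : ℕ) (X : Matrix (Fin n) (Fin p) ℝ) (Y : Fin n → ℝ)
    (hinv : IsUnit (Xᵀ * X).det) (i : Fin n)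
    (hii_lt : X i ⬝ᵥ ((Xᵀ * X)⁻¹ *ᵥ X i) < 1)
    (hinv' : IsUnit (Xᵀ * X - vecMulVec (X i) (X i)).det)
    (xnew : Fin p → ℝ) :
    let yhat : (Fin p → ℝ) → ℝ := fun v =>
      v ⬝ᵥ ((Xᵀ * X - vecMulVec (X i) (X i))⁻¹ *ᵥ (Xᵀ *ᵥ Y - Y i • X i))
    let βhat : Fin p → ℝ := (Xᵀ * X)⁻¹ *ᵥ (Xᵀ *ᵥ Y)
    let hii : ℝ := X i ⬝ᵥ ((Xᵀ * X)⁻¹ *ᵥ X i)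
    let hinew : ℝ := xnew ⬝ᵥ ((Xᵀ * X)⁻¹ *ᵥ X i)
    let u : ℝ := (Y i - X i ⬝ᵥ βhat) / (1 - hii)
    yhat xnew + (Y i - yhat (X i)) = xnew ⬝ᵥ βhat + (1 - hinew) * u := by
  intro yhat βhat hii hinew u
  set A := Xᵀ * X with hA
  set x := X i with hx
  set M := A - vecMulVec x x with hM
  have hne : (1 : ℝ) - hii ≠ 0 := by
    have : hii < 1 := hii_lt
    linarith
  have hu : u * (1 - hii) = Y i - x ⬝ᵥ βhat := by
    exact div_mul_cancel₀ _ hne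
  set w : Fin p → ℝ := βhat - u • (A⁻¹ *ᵥ x) with hw
  have hAw : A *ᵥ w = Xᵀ *ᵥ Y - u • x := by
    simp only [hw, βhat, ← hA, mulVec_sub, mulVec_smul, mulVec_mulVec, ← Matrix.mul_assoc, mul_nonsing_inv A hinv,
      Matrix.one_mul, one_mulVec]
  have hxw : x ⬝ᵥ w = x ⬝ᵥ βhat - u * hii := by
    simp [hw, dotProduct_sub, dotProduct_smul, smul_eq_mul, hii]
    exact Or.inl rfl
  have hMw : M *ᵥ w = Xᵀ *ᵥ Y - Y i • x := by
    rw [hM, sub_mulVec, hAw, vmv_mulVec, hxw]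
    have : Y i = u * (1 - hii) + x ⬝ᵥ βhat := by rw [hu]; ring
    rw [this]
    ext j
    simp [smul_eq_mul]
    ring
  have hMinv : M⁻¹ *ᵥ (Xᵀ *ᵥ Y - Y i • x) = w := by
    rw [← hMw, mulVec_mulVec, nonsing_inv_mul M hinv', one_mulVec]
  have hyhat : ∀ v, yhat v = v ⬝ᵥ βhat - u * (v ⬝ᵥ (A⁻¹ *ᵥ x)) := by
    intro v
    show v ⬝ᵥ (M⁻¹ *ᵥ (Xᵀ *ᵥ Y - Y i • x)) = _
    simp [yhat, hMinv, hw, dotProduct_sub, dotProduct_smul, smul_eq_mul]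
  rw [hyhat, hyhat]
  have : X i ⬝ᵥ (A⁻¹ *ᵥ x) = hii := rfl
  rw [this]
  have h2 : xnew ⬝ᵥ (A⁻¹ *ᵥ x) = hinew := rfl
  rw [h2]
  have : x ⬝ᵥ βhat = X i ⬝ᵥ βhat := rfl
  nlinarith [hu]
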